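/- arXiv:2104.10365 — 4 statements merged into one kernel-verified Lean document; each statement's English description precedes it below -/
import Mathlib

section
/- Fix n ≥ 2, |β| < 1, and reals α, γ, δ. Suppose y ∈ ℝⁿ and x ∈ ℝⁿ satisfy, for every i, y_i = α + β·(1/(n-1))·Σ_{j≠i} y_j + δ·(1/(n-1))·Σ_{j≠i} x_j + γ·x_i. Then for every i, y_i = α/(1-β) + (Σ_{j≠i} x_j)·π₁(n) + x_i·π₂(n), where π₁(n) = ((δ+βγ)/(n-1)) / (1 - β(β+n-2)/(n-1)) and π₂(n) = (γ + β(δ - γ(n-2))/(n-1)) / (1 - β(β+n-2)/(n-1)). -/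
open Finset

/-- Reduced form of the linear-in-means model: if
`y_i = α + β·avg_{j≠i} y_j + δ·avg_{j≠i} x_j + γ x_i` for all `i`, then
`y_i = α/(1-β) + (Σ_{j≠i} x_j)·π₁(n) + x_i·π₂(n)`. -/
theorem stmt_2 (n : ℕ) (hn : 2 ≤ n) (β α γ δ : ℝ) (hβ : |β| < 1)
    (y x : Fin n → ℝ)
    (hstruc : ∀ i, y i = α
      + β * ((1 / ((n : ℝ) - 1)) * ∑ j ∈ univ.erase i, y j)
      + δ * ((1 / ((n : ℝ) - 1)) * ∑ j ∈ univ.erase i, x j)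
      + γ * x i) :
    ∀ i, y i = α / (1 - β)
      + (∑ j ∈ univ.erase i, x j) *
          (((δ + β * γ) / ((n : ℝ) - 1)) / (1 - β * (β + (n : ℝ) - 2) / ((n : ℝ) - 1)))
      + x i *
          ((γ + β * (δ - γ * ((n : ℝ) - 2)) / ((n : ℝ) - 1))
            / (1 - β * (β + (n : ℝ) - 2) / ((n : ℝ) - 1))) := by
  intro i
  have hβ' := abs_lt.mp hβ
  have hn2 : (2:ℝ) ≤ (n:ℝ) := by exact_mod_cast hn
  have hm0 : (0:ℝ) < (n:ℝ) - 1 := by linarith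
  have hm : ((n:ℝ) - 1) ≠ 0 := ne_of_gt hm0
  have hβ1 : (1:ℝ) - β ≠ 0 := by linarith [hβ'.2]
  have hne : ((n:ℝ) - 1 + β) ≠ 0 := by nlinarith [hβ'.1]
  set S := ∑ j, y j with hS_def
  set T := ∑ j, x j with hT_def
  have hsy : ∀ j : Fin n, ∑ k ∈ univ.erase j, y k = S - y j :=
    fun j => Finset.sum_erase_eq_sub (mem_univ j)
  have hsx : ∀ j : Fin n, ∑ k ∈ univ.erase j, x k = T - x j :=
    fun j => Finset.sum_erase_eq_sub (mem_univ j)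
  simp only [hsy, hsx] at hstruc
  have hS2 : (1 - β) * S = (n:ℝ) * α + (δ + γ) * T := by
    have h2 : S = ∑ j, (α + β * ((1 / ((n:ℝ) - 1)) * (S - y j))
        + δ * ((1 / ((n:ℝ) - 1)) * (T - x j)) + γ * x j) :=
      Finset.sum_congr rfl fun j _ => hstruc j
    simp only [Finset.sum_add_distrib, Finset.sum_sub_distrib, ← Finset.mul_sum,
      Finset.sum_const, Finset.card_univ, Fintype.card_fin, nsmul_eq_mul,
      ← hS_def, ← hT_def] at h2
    field_simp at h2
    have h3 : (1 - β) * S * ((n:ℝ) - 1) = ((n:ℝ) * α + (δ + γ) * T) * ((n:ℝ) - 1) := by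
      linear_combination ((n:ℝ) - 1) * h2
    exact mul_right_cancel₀ hm h3
  have hi := hstruc i
  have hyi : y i = (((n:ℝ) - 1) * α + β * S + δ * (T - x i) + γ * ((n:ℝ) - 1) * x i)
      / ((n:ℝ) - 1 + β) := by
    rw [eq_div_iff hne]
    field_simp at hi
    linear_combination hi
  have hSv : S = ((n:ℝ) * α + (δ + γ) * T) / (1 - β) := by
    rw [eq_div_iff hβ1]; linear_combination hS2
  have hDrw : 1 - β * (β + (n:ℝ) - 2) / ((n:ℝ) - 1)
      = (1 - β) * ((n:ℝ) - 1 + β) / ((n:ℝ) - 1) := by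
    field_simp; ring
  rw [hsx i, hyi, hSv, hDrw]
  field_simp
  ring
end

section
/- Fix n ≥ 2, |β| < 1, and reals α, γ, δ. Suppose y ∈ ℝⁿ and x ∈ ℝⁿ satisfy, for every i, y_i = α + β·(1/(n-1))·Σ_{j≠i} y_j + δ·(1/(n-1))·Σ_{j≠i} x_j + γ·x_i. Let ȳ_i = y_i - (1/n)Σ_j y_j and x̄_i = x_i - (1/n)Σ_j x_j denote within-group demeaned variables. Then ȳ_i = x̄_i · π(n) for all i, where π(n) = (γ - δ/(n-1)) / (1 + β/(n-1)). -/
open Finset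

/-- Within-group transformation of the linear-in-means model: demeaned outcomes satisfy
`ȳ_i = x̄_i · π(n)` with `π(n) = (γ - δ/(n-1)) / (1 + β/(n-1))`. -/
theorem stmt_3 (n : ℕ) (hn : 2 ≤ n) (β α γ δ : ℝ) (hβ : |β| < 1)
    (y x : Fin n → ℝ)
    (hstruc : ∀ i, y i = α
      + β * ((1 / ((n : ℝ) - 1)) * ∑ j ∈ univ.erase i, y j)
      + δ * ((1 / ((n : ℝ) - 1)) * ∑ j ∈ univ.erase i, x j)
      + γ * x i) :
    ∀ i, y i - (1 / (n : ℝ)) * ∑ j, y j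
      = (x i - (1 / (n : ℝ)) * ∑ j, x j)
        * ((γ - δ / ((n : ℝ) - 1)) / (1 + β / ((n : ℝ) - 1))) := by
  intro i
  set N : ℝ := (n : ℝ) with hN
  have hN2 : (2 : ℝ) ≤ N := by rw [hN]; exact_mod_cast hn
  have hN0 : N ≠ 0 := by linarith
  have hN1 : N - 1 ≠ 0 := by linarith
  have hN1pos : (0 : ℝ) < N - 1 := by linarith
  have habs : |β| < N - 1 := lt_of_lt_of_le hβ (by linarith)
  have hc : N - 1 + β ≠ 0 := by
    rcases abs_lt.mp habs with ⟨h1, h2⟩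
    intro h; linarith
  have hc2 : 1 + β / (N - 1) ≠ 0 := by
    intro h
    apply hc
    have := mul_eq_zero_of_left h (N - 1)
    field_simp at this
    linarith [this]
  set Sy := ∑ j, y j with hSy
  set Sx := ∑ j, x j with hSx
  have hi : ∀ j : Fin n, y j * (N - 1) =
      α * (N - 1) + β * (Sy - y j) + δ * (Sx - x j) + γ * x j * (N - 1) := by
    intro j
    have h := hstruc j
    rw [Finset.sum_erase_eq_sub (mem_univ j), Finset.sum_erase_eq_sub (mem_univ j)] at h
    field_simp at h
    linarith [h]
  have hS : Sy * (N - 1) =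
      N * (α * (N - 1)) + β * (N * Sy - Sy) + δ * (N * Sx - Sx) + γ * Sx * (N - 1) := by
    have : ∑ j : Fin n, y j * (N - 1) = ∑ j : Fin n,
        (α * (N - 1) + β * (Sy - y j) + δ * (Sx - x j) + γ * x j * (N - 1)) :=
      Finset.sum_congr rfl (fun j _ => hi j)
    simp only [Finset.sum_add_distrib, ← Finset.sum_mul, ← Finset.mul_sum,
      Finset.sum_sub_distrib, Finset.sum_const, Finset.card_univ, Fintype.card_fin,
      nsmul_eq_mul] at this
    rw [← hSy, ← hSx] at this
    convert this using 1 <;> ring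
  have key : (y i - (1 / N) * Sy) * (N - 1 + β) = (x i - (1 / N) * Sx) * (γ * (N - 1) - δ) := by
    have h1 := hi i
    field_simp
    ring_nf
    ring_nf at h1 hS
    nlinarith [h1, hS]
  have hπ : (γ - δ / (N - 1)) / (1 + β / (N - 1)) = (γ * (N - 1) - δ) / (N - 1 + β) := by
    rw [div_eq_div_iff hc2 hc]
    field_simp
  rw [hπ, ← mul_div_assoc, eq_div_iff hc]
  linear_combination key
end

section
/- Define π(n) = (γ(n-1) - δ)/(n-1+β) for n ≥ 2 and |β| < 1. Then π(n) is constant as a function of n (over integers n ≥ 2) if and only if γβ + δ = 0. -/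
/-- `π(n) = (γ(n-1) - δ)/(n-1+β)` is constant over integers `n ≥ 2` if and only if
`γβ + δ = 0`. -/
theorem stmt_4 (β γ δ : ℝ) (hβ : |β| < 1) :
    (∀ n m : ℕ, 2 ≤ n → 2 ≤ m →
        (γ * ((n : ℝ) - 1) - δ) / ((n : ℝ) - 1 + β)
          = (γ * ((m : ℝ) - 1) - δ) / ((m : ℝ) - 1 + β))
      ↔ γ * β + δ = 0 := by
  have hb := abs_lt.mp hβ
  have hden : ∀ n : ℕ, 2 ≤ n → (n : ℝ) - 1 + β ≠ 0 := by
    intro n hn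
    have : (2 : ℝ) ≤ (n : ℝ) := by exact_mod_cast hn
    nlinarith [hb.1, hb.2]
  constructor
  · intro h
    have h23 := h 2 3 (by norm_num) (by norm_num)
    have h2 : (1 : ℝ) + β ≠ 0 := by have := hden 2 (by norm_num); push_cast at this; linarith [hb.1]
    have h3 : (2 : ℝ) + β ≠ 0 := by nlinarith [hb.1, hb.2]
    have e2 := hden 2 (by norm_num)
    have e3 := hden 3 (by norm_num)
    push_cast at h23 e2 e3
    rw [div_eq_div_iff e2 e3] at h23
    nlinarith [h23]
  · intro h n m hn hm
    have hd := h
    have hδ : δ = -(γ * β) := by linarith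
    subst hδ
    rw [div_eq_div_iff (hden n hn) (hden m hm)]
    ring
end

section
/- Let 2 ≤ n₁ < n₂ < n₃ be integers. Suppose (γ, δ, β) and (γ', δ', β') both lie in ℝ × ℝ × (-1,1), satisfy γβ + δ ≠ 0 and γ'β' + δ' ≠ 0, and satisfy π(n_k; γ, δ, β) = π(n_k; γ', δ', β') for k = 1, 2, 3, where π(n; γ, δ, β) = (γ(n-1) - δ)/(n-1+β). Then (γ, δ, β) = (γ', δ', β'). -/
/-- Identification from three group sizes: if two parameter vectors in
`ℝ × ℝ × (-1,1)` with `γβ + δ ≠ 0` produce the same reduced-form coefficients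
`π(n) = (γ(n-1) - δ)/(n-1+β)` at three distinct group sizes `2 ≤ n₁ < n₂ < n₃`,
then they are equal. -/
theorem stmt_5 (n₁ n₂ n₃ : ℕ) (h1 : 2 ≤ n₁) (h12 : n₁ < n₂) (h23 : n₂ < n₃)
    (γ δ β γ' δ' β' : ℝ) (hβ : |β| < 1) (hβ' : |β'| < 1)
    (hnd : γ * β + δ ≠ 0) (hnd' : γ' * β' + δ' ≠ 0)
    (heq : ∀ n : ℕ, n = n₁ ∨ n = n₂ ∨ n = n₃ →
      (γ * ((n : ℝ) - 1) - δ) / ((n : ℝ) - 1 + β)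
        = (γ' * ((n : ℝ) - 1) - δ') / ((n : ℝ) - 1 + β')) :
    γ = γ' ∧ δ = δ' ∧ β = β' := by
  have hb1 : -1 < β := (abs_lt.mp hβ).1
  have hb1' : -1 < β' := (abs_lt.mp hβ').1
  set x₁ : ℝ := (n₁ : ℝ) - 1 with hx₁
  set x₂ : ℝ := (n₂ : ℝ) - 1 with hx₂
  set x₃ : ℝ := (n₃ : ℝ) - 1 with hx₃
  have hn2 : 2 ≤ n₂ := le_of_lt (lt_of_le_of_lt h1 h12)
  have hn3 : 2 ≤ n₃ := le_of_lt (lt_of_le_of_lt hn2 h23)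
  have hx1ge : (1 : ℝ) ≤ x₁ := by
    have : (2 : ℝ) ≤ (n₁ : ℝ) := by exact_mod_cast h1
    simp [hx₁]; linarith
  have hx2ge : (1 : ℝ) ≤ x₂ := by
    have : (2 : ℝ) ≤ (n₂ : ℝ) := by exact_mod_cast hn2
    simp [hx₂]; linarith
  have hx3ge : (1 : ℝ) ≤ x₃ := by
    have : (2 : ℝ) ≤ (n₃ : ℝ) := by exact_mod_cast hn3
    simp [hx₃]; linarith
  have hlt12 : x₁ < x₂ := by
    have : (n₁ : ℝ) < (n₂ : ℝ) := by exact_mod_cast h12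
    simp [hx₁, hx₂]; linarith
  have hlt23 : x₂ < x₃ := by
    have : (n₂ : ℝ) < (n₃ : ℝ) := by exact_mod_cast h23
    simp [hx₂, hx₃]; linarith
  -- cross-multiplied equations
  have key : ∀ x : ℝ, 1 ≤ x →
      (γ * x - δ) / (x + β) = (γ' * x - δ') / (x + β') →
      (γ - γ') * x ^ 2 + (γ * β' - δ - γ' * β + δ') * x + (δ' * β - δ * β') = 0 := by
    intro x hx h
    have d1 : x + β ≠ 0 := by linarith
    have d2 : x + β' ≠ 0 := by linarith
    have := (div_eq_div_iff d1 d2).mp h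
    linear_combination this
  have E₁ := key x₁ hx1ge (heq n₁ (Or.inl rfl))
  have E₂ := key x₂ hx2ge (heq n₂ (Or.inr (Or.inl rfl)))
  have E₃ := key x₃ hx3ge (heq n₃ (Or.inr (Or.inr rfl)))
  have h21 : (x₂ - x₁) * ((γ - γ') * (x₁ + x₂) + (γ * β' - δ - γ' * β + δ')) = 0 := by
    linear_combination E₂ - E₁
  have h32 : (x₃ - x₂) * ((γ - γ') * (x₂ + x₃) + (γ * β' - δ - γ' * β + δ')) = 0 := by
    linear_combination E₃ - E₂
  have ne21 : x₂ - x₁ ≠ 0 := by linarith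
  have ne32 : x₃ - x₂ ≠ 0 := by linarith
  have h21' := (mul_eq_zero.mp h21).resolve_left ne21
  have h32' := (mul_eq_zero.mp h32).resolve_left ne32
  have ha0 : (γ - γ') * (x₃ - x₁) = 0 := by linear_combination h32' - h21'
  have ne31 : x₃ - x₁ ≠ 0 := by linarith
  have ha : γ - γ' = 0 := (mul_eq_zero.mp ha0).resolve_right ne31
  have hb : γ * β' - δ - γ' * β + δ' = 0 := by linear_combination h21' - (x₁ + x₂) * ha
  have hc : δ' * β - δ * β' = 0 := by
    linear_combination E₁ - x₁ ^ 2 * ha - x₁ * hb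
  have hγ : γ = γ' := by linarith
  have hββ : (γ * β + δ) * (β - β') = 0 := by
    linear_combination hc - β * hb + β ^ 2 * ha
  have hβeq : β = β' := by
    have := (mul_eq_zero.mp hββ).resolve_left hnd
    linarith
  refine ⟨hγ, ?_, hβeq⟩
  have : γ * β' - γ' * β = 0 := by rw [hγ, hβeq]; ring
  linarith [hb]
end
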